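/- In the standardness condition for a term C_i(a,b) of the C_i ordinal notation system, the built-from-below condition is unchanged if (i) the clause 'lies inside an occurrence of a subterm z of a with z < C_i(a,b)' is replaced by 'lies inside an occurrence of a subterm z of a with z ≤ b', and it is likewise unchanged if (ii) in the passthrough clause, 'does not lie inside a subterm of that occurrence of C_j(e,f) which is < C_j(e,f)' is replaced by 'does not lie inside a subterm of that occurrence of C_j(e,f) which is ≤ f'. That is, each replacement yields an equivalent standardness predicate on terms. -/
import Mathlib


/-- Terms of the `C_i` ordinal notation system: the constant `0` and, for each natural
number `i`, a binary function symbol `C_i`. -/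
inductive CT where
  | zero : CT
  | C (i : ℕ) (a b : CT) : CT

/-- The comparison relation: `0 < C_i(a,b)`, and `C_i(a,b) < C_j(c,d)` iff
`C_i(a,b) ≤ d`, or (`b < C_j(c,d)` and `(i,a) < (j,c)` lexicographically). -/
def clt : CT → CT → Prop
  | _, .zero => False
  | .zero, .C _ _ _ => True
  | .C i a b, .C j c d =>
      (clt (CT.C i a b) d ∨ CT.C i a b = d) ∨
      (clt b (CT.C j c d) ∧ (i < j ∨ (i = j ∧ clt a c)))
termination_by t u => sizeOf t + sizeOf u
decreasing_by all_goals (simp only [CT.C.sizeOf_spec]; omega)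

/-- `t ≤ u` for terms. -/
def cle (t u : CT) : Prop := clt t u ∨ t = u

/-- Directions into the two arguments of `C_i`. -/
inductive Dir where
  | l : Dir
  | r : Dir

/-- The subterm occurrence of a term at a position (a path of directions), if any. -/
def occAt : CT → List Dir → Option CT
  | t, [] => some t
  | .zero, _ :: _ => none
  | .C _ a _, Dir.l :: p => occAt a p
  | .C _ _ b, Dir.r :: p => occAt b p

/-- `a` is built from below from `< C_i(a,b)` with passthrough for `(C_j : j < i)`:
every occurrence (position `p`) in `a` of a subterm `x` with `x > a` either
(i) lies inside an occurrence of a subterm `z` of `a` with `z < C_i(a,b)`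
    (or, if `leB = true`, with `z ≤ b`), or
(ii) is a proper subterm of an occurrence of a term `C_j(e,f)` with `j < i` and does not
    lie inside a subterm of that occurrence of `C_j(e,f)` which is `< C_j(e,f)`
    (or, if `passLeF = true`, which is `≤ f`). -/
def BFB (leB passLeF : Bool) (i : ℕ) (a b : CT) : Prop :=
  ∀ (p : List Dir) (x : CT), occAt a p = some x → clt a x →
    (∃ (q : List Dir) (z : CT), q <+: p ∧ occAt a q = some z ∧
        (if leB then cle z b else clt z (CT.C i a b))) ∨
    (∃ (q : List Dir) (j : ℕ) (e f : CT), q <+: p ∧ q ≠ p ∧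
        occAt a q = some (CT.C j e f) ∧ j < i ∧
        ∀ (r : List Dir) (z : CT), q <+: r → r <+: p → occAt a r = some z →
          ¬ (if passLeF then cle z f else clt z (CT.C j e f)))

/-- Standardness of terms of the `C_i` system (with the indicated variants of the
built-from-below condition). -/
def Std (leB passLeF : Bool) : CT → Prop
  | .zero => True
  | .C i a b => Std leB passLeF a ∧ Std leB passLeF b ∧
      (b = CT.zero ∨ ∃ (j : ℕ) (c d : CT), b = CT.C j c d ∧
        (i < j ∨ (i = j ∧ cle a c))) ∧
      BFB leB passLeF i a b

section Order

@[simp] lemma clt_zero_right (t : CT) : ¬ clt t CT.zero := by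
  cases t <;> simp [clt]

@[simp] lemma clt_zero_C (j : ℕ) (c d : CT) : clt CT.zero (CT.C j c d) := by
  simp [clt]

lemma clt_CC {i j : ℕ} {a b c d : CT} :
    clt (CT.C i a b) (CT.C j c d) ↔
      (clt (CT.C i a b) d ∨ CT.C i a b = d) ∨
      (clt b (CT.C j c d) ∧ (i < j ∨ (i = j ∧ clt a c))) := by
  rw [clt]

lemma sizeOf_C_right (i : ℕ) (a b : CT) : sizeOf b < sizeOf (CT.C i a b) := by
  simp only [CT.C.sizeOf_spec]; omega

lemma sizeOf_C_left (i : ℕ) (a b : CT) : sizeOf a < sizeOf (CT.C i a b) := by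
  simp only [CT.C.sizeOf_spec]; omega

lemma C_ne_right (i : ℕ) (a b : CT) : CT.C i a b ≠ b := by
  intro h
  have := sizeOf_C_right i a b
  rw [h] at this; omega

/-- right child is smaller -/
lemma clt_right (i : ℕ) (a b : CT) : clt b (CT.C i a b) := by
  cases b with
  | zero => simp
  | C j c d => rw [clt_CC]; left; right; rfl

lemma clt_trans : ∀ {s t u : CT}, clt s t → clt t u → clt s u := by
  suffices H : ∀ n (s t u : CT), sizeOf s + sizeOf t + sizeOf u ≤ n →
      clt s t → clt t u → clt s u by
    intro s t u h1 h2
    exact H _ s t u le_rfl h1 h2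
  intro n
  induction n with
  | zero => intro s t u h; cases s <;> cases t <;> simp at h
  | succ n ih =>
    intro s t u hsz h1 h2
    cases u with
    | zero => exact absurd h2 (clt_zero_right t)
    | C k e f =>
      cases t with
      | zero => exact absurd h1 (clt_zero_right s)
      | C j c d =>
        cases s with
        | zero => simp
        | C i a b =>
          rw [clt_CC] at h1 h2 ⊢
          rcases h2 with (h2 | ⟨hd, hlex2⟩)
          · -- t ≤ f
            left; left
            rcases h2 with h2 | h2
            · -- t < f
              have : sizeOf (CT.C i a b) + sizeOf (CT.C j c d) + sizeOf f ≤ n := by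
                have := sizeOf_C_right k e f; omega
              exact ih _ _ _ this (by rw [clt_CC]; exact h1) h2
            · rw [← h2]; rw [clt_CC]; exact h1
          · -- d < u ∧ (j,c) < (k,e)
            rcases h1 with (h1 | ⟨hb, hlex1⟩)
            · -- s ≤ d
              rcases h1 with h1 | h1
              · -- s < d
                have : sizeOf (CT.C i a b) + sizeOf d + sizeOf (CT.C k e f) ≤ n := by
                  have := sizeOf_C_right j c d; omega
                have := ih _ _ _ this h1 hd
                rw [clt_CC] at this; exact this
              · subst h1; rw [clt_CC] at hd; exact hd
            · -- b < t ∧ (i,a) < (j,c)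
              right
              constructor
              · have : sizeOf b + sizeOf (CT.C j c d) + sizeOf (CT.C k e f) ≤ n := by
                  have := sizeOf_C_right i a b; omega
                exact ih _ _ _ this hb (by rw [clt_CC]; right; exact ⟨hd, hlex2⟩)
              · rcases hlex1 with h | ⟨hij, hac⟩
                · rcases hlex2 with h' | ⟨hjk, _⟩
                  · exact Or.inl (h.trans h')
                  · exact Or.inl (hjk ▸ h)
                · rcases hlex2 with h' | ⟨hjk, hce⟩
                  · exact Or.inl (hij ▸ h')
                  · right
                    refine ⟨hij.trans hjk, ?_⟩
                    have : sizeOf a + sizeOf c + sizeOf e ≤ n := by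
                      have := sizeOf_C_left i a b
                      have := sizeOf_C_left j c d
                      have := sizeOf_C_left k e f
                      omega
                    exact ih _ _ _ this hac hce

lemma clt_irrefl : ∀ (t : CT), ¬ clt t t := by
  suffices H : ∀ n (t : CT), sizeOf t ≤ n → ¬ clt t t by
    intro t; exact H _ t le_rfl
  intro n
  induction n with
  | zero => intro t h; cases t <;> simp_all
  | succ n ih =>
    intro t hsz ht
    cases t with
    | zero => simp at ht
    | C i a b =>
      rw [clt_CC] at ht
      rcases ht with (ht | ht) | ⟨_, (h | ⟨_, h⟩)⟩
      · -- clt t b, but b < t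
        have hb := clt_right i a b
        have : clt b b := clt_trans hb ht
        exact ih b (by have := sizeOf_C_right i a b; omega) this
      · exact C_ne_right i a b ht
      · omega
      · exact ih a (by have := sizeOf_C_left i a b; omega) h

lemma clt_asymm {s t : CT} (h : clt s t) : ¬ clt t s :=
  fun h' => clt_irrefl s (clt_trans h h')

lemma cle_refl (t : CT) : cle t t := Or.inr rfl

lemma clt_of_cle_of_clt {s t u : CT} (h1 : cle s t) (h2 : clt t u) : clt s u := by
  rcases h1 with h1 | rfl
  · exact clt_trans h1 h2
  · exact h2

lemma clt_of_clt_of_cle {s t u : CT} (h1 : clt s t) (h2 : cle t u) : clt s u := by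
  rcases h2 with h2 | rfl
  · exact clt_trans h1 h2
  · exact h1

lemma cle_trans {s t u : CT} (h1 : cle s t) (h2 : cle t u) : cle s u := by
  rcases h2 with h2 | rfl
  · exact Or.inl (clt_of_cle_of_clt h1 h2)
  · exact h1

lemma not_clt_of_cle {s t : CT} (h : cle s t) : ¬ clt t s := by
  rcases h with h | rfl
  · exact clt_asymm h
  · exact clt_irrefl _

lemma clt_C_of_cle_right {z f : CT} (j : ℕ) (e : CT) (h : cle z f) :
    clt z (CT.C j e f) :=
  clt_of_cle_of_clt h (clt_right j e f)

end Order
section Spine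

/-- spine lemma -/
lemma spine {z f : CT} {j : ℕ} {e : CT} (h : clt z (CT.C j e f)) (hnle : ¬ cle z f) :
    ∃ k u v, z = CT.C k u v ∧ (k < j ∨ (k = j ∧ clt u e)) ∧ clt v (CT.C j e f) := by
  cases z with
  | zero =>
    exfalso; apply hnle
    cases f with
    | zero => exact Or.inr rfl
    | C _ _ _ => exact Or.inl (clt_zero_C _ _ _)
  | C k u v =>
    rw [clt_CC] at h
    rcases h with h | ⟨hv, hlex⟩
    · exact absurd h hnle
    · exact ⟨k, u, v, rfl, hlex, hv⟩

/-- head index of spine element is < j (when < i etc.) -/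
lemma lemmaN {i : ℕ} {A B U V : CT} {K : ℕ}
    (hV : clt V (CT.C i A B)) (hK : K < i ∨ (K = i ∧ clt U A)) :
    ∀ w, clt w (CT.C K U V) → clt w (CT.C i A B) := by
  intro w
  induction w with
  | zero => intro _; exact clt_zero_C _ _ _
  | C k' u' v' ihu ihv =>
    intro h
    rw [clt_CC] at h
    rcases h with (h | rfl) | ⟨hv', hlex⟩
    · exact clt_trans h hV
    · exact hV
    · rw [clt_CC]
      right
      refine ⟨ihv hv', ?_⟩
      rcases hlex with h | ⟨rfl, hu⟩
      · rcases hK with h' | ⟨rfl, _⟩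
        · exact Or.inl (h.trans h')
        · exact Or.inl h
      · rcases hK with h' | ⟨rfl, hU⟩
        · exact Or.inl h'
        · exact Or.inr ⟨rfl, clt_trans hu hU⟩

end Spine

section WStd

/-- weak standardness: only the head conditions -/
def WStd : CT → Prop
  | .zero => True
  | .C i a b => WStd a ∧ WStd b ∧
      (b = CT.zero ∨ ∃ (j : ℕ) (c d : CT), b = CT.C j c d ∧
        (i < j ∨ (i = j ∧ cle a c)))

lemma Std.wstd {lB pf : Bool} : ∀ {t : CT}, Std lB pf t → WStd t := by
  intro t
  induction t with
  | zero => intro _; trivial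
  | C i a b iha ihb =>
    intro h
    rcases h with ⟨ha, hb, hc, _⟩
    exact ⟨iha ha, ihb hb, hc⟩

/-- base lemma: `C i a 0 ≤ v` for weakly standard `v` with head `≥lex (i,a)`. -/
lemma base_le {i : ℕ} {a : CT} :
    ∀ (v : CT), WStd v → ∀ m sm tm, v = CT.C m sm tm →
      (i < m ∨ (i = m ∧ cle a sm)) → cle (CT.C i a CT.zero) v := by
  intro v
  induction v with
  | zero => intro _ m sm tm h; exact absurd h (by simp)
  | C m' sm' tm' ihs iht =>
    intro hw m sm tm heq hlex
    injection heq with h1 h2 h3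
    subst h1; subst h2; subst h3
    rcases hlex with h | ⟨rfl, hle⟩
    · exact Or.inl (by rw [clt_CC]; right; exact ⟨clt_zero_C _ _ _, Or.inl h⟩)
    · rcases hle with hlt | rfl
      · exact Or.inl (by rw [clt_CC]; right; exact ⟨clt_zero_C _ _ _, Or.inr ⟨rfl, hlt⟩⟩)
      · -- same head (i, a); recurse into tm
        rcases hw with ⟨_, hwt, hhc⟩
        rcases hhc with rfl | ⟨j', c', d', rfl, hl'⟩
        · exact Or.inr rfl
        · have := iht hwt j' c' d' rfl hl'
          exact Or.inl (by rw [clt_CC]; left; exact this)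

/-- lex asymmetry helper -/
lemma lex_asymm {k i : ℕ} {u a : CT} (h1 : k < i ∨ (k = i ∧ clt u a))
    (h2 : i < k ∨ (i = k ∧ cle a u)) : False := by
  rcases h1 with h | ⟨e1, h⟩ <;> rcases h2 with h' | ⟨e2, h'⟩
  · omega
  · omega
  · omega
  · exact not_clt_of_cle h' h

/-- same-head lemma: if `C i a b` is weakly standard and `b < d` with `d` weakly
standard of head `≥lex (i,a)`, then `C i a b ≤ d`. -/
lemma same_head {i : ℕ} {a : CT} :
    ∀ (d : CT), WStd d → ∀ b, WStd (CT.C i a b) → clt b d →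
      (∀ j c d', d = CT.C j c d' → (i < j ∨ (i = j ∧ cle a c))) →
      cle (CT.C i a b) d := by
  intro d
  induction d with
  | zero => intro _ b _ hbd _; exact absurd hbd (clt_zero_right b)
  | C j c d' ihc ihd =>
    intro hwd b hws hbd hhd
    rcases hhd j c d' rfl with h | ⟨rfl, hac⟩
    · exact Or.inl (by rw [clt_CC]; right; exact ⟨hbd, Or.inl h⟩)
    · rcases hac with hlt | rfl
      · exact Or.inl (by rw [clt_CC]; right; exact ⟨hbd, Or.inr ⟨rfl, hlt⟩⟩)
      · -- same head (i,a) = (j,c)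
        cases b with
        | zero =>
          -- use base lemma on d'
          rcases hwd with ⟨_, hwd', hhc⟩
          rcases hhc with rfl | ⟨j', c', dd, rfl, hl'⟩
          · exact Or.inr rfl
          · have := base_le (i := i) (a := a) _ hwd' j' c' dd rfl hl'
            exact Or.inl (by rw [clt_CC]; left; exact this)
        | C kb ub vb =>
          rw [clt_CC] at hbd
          rcases hbd with hbd | ⟨_, hlexb⟩
          · -- b ≤ d'
            rcases hbd with hbd | rfl
            · -- b < d'; recurse
              rcases hwd with ⟨_, hwd', hhc⟩
              have hhd' : ∀ j' c' dd, d' = CT.C j' c' dd → (i < j' ∨ (i = j' ∧ cle a c')) := by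
                intro j' c' dd hdeq
                subst hdeq
                rcases hhc with h | ⟨j2, c2, d2, heq, hl2⟩
                · exact absurd h (by simp)
                · injection heq with e1 e2 e3; subst e1; subst e2; subst e3; exact hl2
              have := ihd hwd' _ hws hbd hhd'
              exact Or.inl (by rw [clt_CC]; left; exact this)
            · -- b = d' : then C i a b = C i a d' = d
              exact Or.inr rfl
          · -- b's head <lex (i,a): contradicts WStd (C i a b)
            exfalso
            rcases hws with ⟨_, _, hhb⟩
            rcases hhb with h | ⟨j2, c2, d2, heq, hl2⟩
            · exact absurd h (by simp)
            · injection heq with e1 e2 e3; subst e1; subst e2; subst e3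
              exact lex_asymm hlexb hl2

/-- totality on weakly standard terms -/
lemma wstd_total : ∀ {s t : CT}, WStd s → WStd t → clt s t ∨ s = t ∨ clt t s := by
  suffices H : ∀ n (s t : CT), sizeOf s + sizeOf t ≤ n → WStd s → WStd t →
      clt s t ∨ s = t ∨ clt t s by
    intro s t hs ht; exact H _ s t le_rfl hs ht
  intro n
  induction n with
  | zero => intro s t h; cases s <;> cases t <;> simp_all
  | succ n ih =>
    intro s t hsz hws hwt
    cases s with
    | zero =>
      cases t with
      | zero => exact Or.inr (Or.inl rfl)
      | C _ _ _ => exact Or.inl (clt_zero_C _ _ _)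
    | C i a b =>
      cases t with
      | zero => exact Or.inr (Or.inr (clt_zero_C _ _ _))
      | C j c d =>
        have hsa : sizeOf a + sizeOf c ≤ n := by
          have := sizeOf_C_left i a b; have := sizeOf_C_left j c d; omega
        have hsbd : sizeOf b + sizeOf d ≤ n := by
          have := sizeOf_C_right i a b; have := sizeOf_C_right j c d; omega
        rcases hws with ⟨hwa, hwb, hhb⟩
        rcases hwt with ⟨hwc, hwd, hhd⟩
        -- trichotomy on heads
        have hbt : sizeOf b + sizeOf (CT.C j c d) ≤ n := by
          have := sizeOf_C_right i a b; omega
        have hds : sizeOf d + sizeOf (CT.C i a b) ≤ n := by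
          have := sizeOf_C_right j c d; omega
        rcases Nat.lt_trichotomy i j with hij | hij | hij
        · -- (i,a) < (j,c) via index
          rcases ih b (CT.C j c d) hbt hwb ⟨hwc, hwd, hhd⟩ with h | h | h
          · left; rw [clt_CC]; right; exact ⟨h, Or.inl hij⟩
          · subst h; exact Or.inr (Or.inr (clt_right i a _))
          · exact Or.inr (Or.inr (clt_trans h (clt_right i a b)))
        · subst hij
          rcases ih a c hsa hwa hwc with hac | hac | hac
          · -- a < c
            rcases ih b (CT.C i c d) hbt hwb ⟨hwc, hwd, hhd⟩ with h | h | h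
            · left; rw [clt_CC]; right; exact ⟨h, Or.inr ⟨rfl, hac⟩⟩
            · subst h; exact Or.inr (Or.inr (clt_right i a _))
            · exact Or.inr (Or.inr (clt_trans h (clt_right i a b)))
          · subst hac
            -- same head: compare b, d
            rcases ih b d hsbd hwb hwd with hbd | hbd | hbd
            · left
              have hcond : ∀ j' c' d', d = CT.C j' c' d' → (i < j' ∨ (i = j' ∧ cle a c')) := by
                intro j' c' d' hdeq
                subst hdeq
                rcases hhd with h | ⟨j2, c2, d2, heq, hl2⟩
                · exact absurd h (by simp)
                · injection heq with e1 e2 e3; subst e1; subst e2; subst e3; exact hl2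
              rcases same_head d hwd b ⟨hwa, hwb, hhb⟩ hbd hcond with h | h
              · rw [clt_CC]; left; exact Or.inl h
              · rw [clt_CC]; left; exact Or.inr h
            · subst hbd; exact Or.inr (Or.inl rfl)
            · right; right
              have hcond : ∀ j' c' d', b = CT.C j' c' d' → (i < j' ∨ (i = j' ∧ cle a c')) := by
                intro j' c' d' hdeq
                subst hdeq
                rcases hhb with h | ⟨j2, c2, d2, heq, hl2⟩
                · exact absurd h (by simp)
                · injection heq with e1 e2 e3; subst e1; subst e2; subst e3; exact hl2
              rcases same_head b hwb d ⟨hwa, hwd, hhd⟩ hbd hcond with h | h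
              · rw [clt_CC]; left; exact Or.inl h
              · rw [clt_CC]; left; exact Or.inr h
          · -- c < a
            rcases ih d (CT.C i a b) hds hwd ⟨hwa, hwb, hhb⟩ with h | h | h
            · right; right; rw [clt_CC]; right; exact ⟨h, Or.inr ⟨rfl, hac⟩⟩
            · subst h; exact Or.inl (clt_right i c _)
            · exact Or.inl (clt_trans h (clt_right i c d))
        · rcases ih d (CT.C i a b) hds hwd ⟨hwa, hwb, hhb⟩ with h | h | h
          · right; right; rw [clt_CC]; right; exact ⟨h, Or.inl hij⟩
          · subst h; exact Or.inl (clt_right j c _)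
          · exact Or.inl (clt_trans h (clt_right j c d))

end WStd
section Occ

instance : Inhabited CT := ⟨CT.zero⟩

lemma occAt_append (t : CT) (q r : List Dir) :
    occAt t (q ++ r) = (occAt t q).bind (fun s => occAt s r) := by
  induction q generalizing t with
  | nil => simp [occAt]
  | cons d q ih =>
    cases t with
    | zero => simp [occAt]
    | C i a b => cases d <;> simp [occAt, ih]

lemma occAt_prefix {a : CT} {p : List Dir} {x : CT} (h : occAt a p = some x)
    {q : List Dir} (hq : q <+: p) : ∃ z, occAt a q = some z := by
  obtain ⟨r, rfl⟩ := hq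
  rw [occAt_append] at h
  cases hoq : occAt a q with
  | none => rw [hoq] at h; simp at h
  | some z => exact ⟨z, rfl⟩

lemma Std_occAt {lB pf : Bool} : ∀ (q : List Dir) (t s : CT),
    Std lB pf t → occAt t q = some s → Std lB pf s := by
  intro q
  induction q with
  | nil => intro t s ht h; simp [occAt] at h; exact h ▸ ht
  | cons d q ih =>
    intro t s ht h
    cases t with
    | zero => simp [occAt] at h
    | C i a b =>
      rcases ht with ⟨ha, hb, _, _⟩
      cases d with
      | l => exact ih a s ha h
      | r => exact ih b s hb h

lemma WStd_occAt : ∀ (q : List Dir) (t s : CT),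
    WStd t → occAt t q = some s → WStd s := by
  intro q
  induction q with
  | nil => intro t s ht h; simp [occAt] at h; exact h ▸ ht
  | cons d q ih =>
    intro t s ht h
    cases t with
    | zero => simp [occAt] at h
    | C i a b =>
      rcases ht with ⟨ha, hb, _⟩
      cases d with
      | l => exact ih a s ha h
      | r => exact ih b s hb h

lemma prefix_eq_take {q p : List Dir} (h : q <+: p) : q = p.take q.length :=
  List.prefix_iff_eq_take.mp h

lemma take_prefix_take {p : List Dir} {k m : ℕ} (h : k ≤ m) :
    p.take k <+: p.take m := by
  refine ⟨(p.drop k).take (m - k), ?_⟩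
  rw [← List.take_add]
  congr 1
  omega

end Occ

section Min

/-- first-min over a contiguous index segment -/
lemma exists_firstMin (g : ℕ → CT) (lo hi : ℕ) (hle : lo ≤ hi)
    (tot : ∀ k m, lo ≤ k → k ≤ hi → lo ≤ m → m ≤ hi →
      clt (g k) (g m) ∨ g k = g m ∨ clt (g m) (g k)) :
    ∃ k, lo ≤ k ∧ k ≤ hi ∧ (∀ m, lo ≤ m → m ≤ hi → cle (g k) (g m)) ∧
      (∀ m, lo ≤ m → m < k → clt (g k) (g m)) := by
  obtain ⟨d, hd⟩ : ∃ d, hi = lo + d := ⟨hi - lo, by omega⟩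
  subst hd
  clear hle
  induction d generalizing lo with
  | zero =>
    refine ⟨lo, le_rfl, by omega, ?_, by omega⟩
    intro m h1 h2
    have : m = lo := by omega
    subst this; exact cle_refl _
  | succ d ih =>
    have tot' : ∀ k m, lo + 1 ≤ k → k ≤ (lo + 1) + d → lo + 1 ≤ m → m ≤ (lo + 1) + d →
        clt (g k) (g m) ∨ g k = g m ∨ clt (g m) (g k) := by
      intro k m h1 h2 h3 h4; exact tot k m (by omega) (by omega) (by omega) (by omega)
    obtain ⟨k', h1, h2, hmin, hstrict⟩ := ih (lo + 1) tot'
    rcases tot lo k' le_rfl (by omega) (by omega) (by omega) with h | h | h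
    · -- g lo < g k' : pick lo
      refine ⟨lo, le_rfl, by omega, ?_, by omega⟩
      intro m hm1 hm2
      rcases Nat.eq_or_lt_of_le hm1 with rfl | hm1'
      · exact cle_refl _
      · exact cle_trans (Or.inl h) (hmin m (by omega) (by omega))
    · -- equal: pick lo
      refine ⟨lo, le_rfl, by omega, ?_, by omega⟩
      intro m hm1 hm2
      rcases Nat.eq_or_lt_of_le hm1 with rfl | hm1'
      · exact cle_refl _
      · exact cle_trans (Or.inr h) (hmin m (by omega) (by omega))
    · -- g k' < g lo : pick k'
      refine ⟨k', by omega, by omega, ?_, ?_⟩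
      · intro m hm1 hm2
        rcases Nat.eq_or_lt_of_le hm1 with rfl | hm1'
        · exact Or.inl h
        · exact hmin m (by omega) (by omega)
      · intro m hm1 hm2
        rcases Nat.eq_or_lt_of_le hm1 with rfl | hm1'
        · exact h
        · exact hstrict m (by omega) hm2

/-- min-value element over a (nonempty) predicate on an initial segment of ℕ -/
lemma exists_minQ (g : ℕ → CT) (n : ℕ) (Q : ℕ → Prop)
    (tot : ∀ k m, k ≤ n → m ≤ n → clt (g k) (g m) ∨ g k = g m ∨ clt (g m) (g k))
    (hne : ∃ k, k ≤ n ∧ Q k) :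
    ∃ k, k ≤ n ∧ Q k ∧ ∀ m, m ≤ n → Q m → cle (g k) (g m) := by
  induction n with
  | zero =>
    obtain ⟨k, hk, hQ⟩ := hne
    have : k = 0 := by omega
    subst this
    refine ⟨0, le_rfl, hQ, ?_⟩
    intro m hm _
    have : m = 0 := by omega
    subst this; exact cle_refl _
  | succ n ih =>
    by_cases hex : ∃ k, k ≤ n ∧ Q k
    · obtain ⟨k', h1, h2, hmin⟩ := ih (fun k m hk hm => tot k m (by omega) (by omega)) hex
      by_cases hQ : Q (n + 1)
      · rcases tot k' (n+1) (by omega) le_rfl with h | h | h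
        · refine ⟨k', by omega, h2, ?_⟩
          intro m hm hQm
          rcases Nat.eq_or_lt_of_le hm with rfl | hm'
          · exact Or.inl h
          · exact hmin m (by omega) hQm
        · refine ⟨k', by omega, h2, ?_⟩
          intro m hm hQm
          rcases Nat.eq_or_lt_of_le hm with rfl | hm'
          · exact Or.inr h
          · exact hmin m (by omega) hQm
        · refine ⟨n+1, le_rfl, hQ, ?_⟩
          intro m hm hQm
          rcases Nat.eq_or_lt_of_le hm with rfl | hm'
          · exact cle_refl _
          · exact cle_trans (Or.inl h) (hmin m (by omega) hQm)
      · refine ⟨k', by omega, h2, ?_⟩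
        intro m hm hQm
        rcases Nat.eq_or_lt_of_le hm with rfl | hm'
        · exact absurd hQm hQ
        · exact hmin m (by omega) hQm
    · obtain ⟨k, hk, hQ⟩ := hne
      have : k = n + 1 := by
        rcases Nat.eq_or_lt_of_le hk with rfl | h
        · rfl
        · exact absurd ⟨k, by omega, hQ⟩ hex
      subst this
      refine ⟨n+1, le_rfl, hQ, ?_⟩
      intro m hm hQm
      rcases Nat.eq_or_lt_of_le hm with rfl | hm'
      · exact cle_refl _
      · exact absurd ⟨m, by omega, hQm⟩ hex

end Min
section Helpers2

lemma append_prefix_append {t q r : List Dir} : (t ++ q) <+: (t ++ r) ↔ q <+: r := by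
  constructor
  · rintro ⟨s, hs⟩
    rw [List.append_assoc] at hs
    exact ⟨s, List.append_cancel_left hs⟩
  · rintro ⟨s, rfl⟩
    exact ⟨s, by rw [List.append_assoc]⟩

lemma take_succ_of_lt {p : List Dir} {k : ℕ} (h : k < p.length) :
    p.take (k + 1) = p.take k ++ [p[k]] := by
  rw [List.take_succ]
  congr 1
  rw [List.getElem?_eq_getElem h]
  rfl

lemma take_ne_self {p : List Dir} {k : ℕ} (h : k < p.length) : p.take k ≠ p := by
  intro he
  have := congrArg List.length he
  rw [List.length_take] at this
  omega

lemma prefix_decomp {p q : List Dir} {k : ℕ} (h1 : p.take k ++ q <+: p) :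
    q <+: p.drop k := by
  obtain ⟨s, hs⟩ := h1
  refine ⟨s, ?_⟩
  have := hs
  rw [List.append_assoc] at this
  conv at this => rhs; rw [← List.take_append_drop k p]
  exact List.append_cancel_left this

lemma prefix_comp {p q : List Dir} {k : ℕ} (h : q <+: p.drop k) :
    p.take k ++ q <+: p := by
  obtain ⟨s, hs⟩ := h
  exact ⟨s, by rw [List.append_assoc, hs, List.take_append_drop]⟩

end Helpers2

section Hard1

lemma bfb_ff_to_tf {i : ℕ} {a b : CT} (hstd : Std false false a)
    (h : BFB false false i a b) : BFB true false i a b := by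
  intro p x hocc hax
  set n := p.length with hn
  set P := CT.C i a b with hP
  set g : ℕ → CT := fun k => (occAt a (p.take k)).getD CT.zero with hgdef
  have hg : ∀ k, k ≤ n → occAt a (p.take k) = some (g k) := by
    intro k hk
    obtain ⟨z, hz⟩ := occAt_prefix hocc (List.take_prefix k p)
    rw [hgdef]; simp only [hz, Option.getD_some]
  have geq : ∀ {m : ℕ} {w : CT}, m ≤ n → occAt a (p.take m) = some w → g m = w := by
    intro m w hm hw
    have := hg m hm
    rw [this] at hw
    exact Option.some_inj.mp hw
  have hgn : g n = x := geq le_rfl (by rw [List.take_length]; exact hocc)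
  have hg0 : g 0 = a := geq (Nat.zero_le _) (by simp [occAt])
  have hwst : ∀ k, k ≤ n → WStd (g k) := by
    intro k hk
    exact WStd_occAt _ _ _ hstd.wstd (hg k hk)
  have htot : ∀ k m, k ≤ n → m ≤ n →
      clt (g k) (g m) ∨ g k = g m ∨ clt (g m) (g k) := by
    intro k m hk hm
    exact wstd_total (hwst k hk) (hwst m hm)
  -- if some prefix value ≤ b, clause (i) of tf
  by_cases hble : ∃ k, k ≤ n ∧ cle (g k) b
  · obtain ⟨k, hk, hkb⟩ := hble
    left
    exact ⟨p.take k, g k, List.take_prefix k p, hg k hk, by simpa using hkb⟩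
  push_neg at hble
  rcases h p x hocc hax with ⟨q, z, hqp, hoz, hz⟩ | H
  · -- clause i of ff: build W and take min
    simp only [if_neg (by simp : ¬ (false = true))] at hz
    have hzlt : clt z P := by simpa using hz
    have hk1 : q.length ≤ n := by
      have := hqp.length_le; omega
    have hzq : g q.length = z := geq hk1 (by rw [← prefix_eq_take hqp]; exact hoz)
    obtain ⟨kh, hkhn, hQ, hmin⟩ := exists_minQ g n (fun k => clt (g k) P) htot
      ⟨q.length, hk1, by show clt (g q.length) P; rw [hzq]; exact hzlt⟩
    -- kh ≠ n
    have hkhlt : kh < n := by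
      rcases Nat.eq_or_lt_of_le hkhn with rfl | h'
      · exfalso
        have haP : clt (g 0) P := by rw [hg0]; exact clt_trans hax (hgn ▸ hQ)
        have := hmin 0 (Nat.zero_le _) haP
        rw [hg0, hgn] at this
        exact clt_irrefl _ (clt_of_cle_of_clt this hax)
      · exact h'
    obtain ⟨K, U, V, hgk, hK, hV⟩ := spine hQ (hble kh hkhn)
    rcases hK with hKlt | ⟨rfl, hUa⟩
    · -- K < i : witness at kh
      right
      refine ⟨p.take kh, K, U, V, List.take_prefix _ _, take_ne_self hkhlt,
        by rw [hg kh hkhn, hgk], hKlt, ?_⟩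
      intro r z' h1 h2 hoz'
      simp only [if_neg (by simp : ¬ (false = true))]
      intro hlt
      have hrl : r.length ≤ n := by have := h2.length_le; omega
      have hz' : g r.length = z' := geq hrl (by rw [← prefix_eq_take h2]; exact hoz')
      have : clt (g r.length) P := clt_trans (by rw [hz']; rw [← hgk] at hlt; exact hlt) hQ
      have := hmin r.length hrl this
      rw [hz'] at this
      exact not_clt_of_cle this (hgk ▸ hlt)
    · -- K = i, U < a
      have hstep := take_succ_of_lt hkhlt
      cases hd : p[kh] with
      | r =>
        exfalso
        have hoV : occAt a (p.take (kh + 1)) = some V := by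
          rw [hstep, hd, occAt_append, hg kh hkhn, hgk]
          simp [occAt]
        have hgV : g (kh+1) = V := geq (by omega) hoV
        have hmv := hmin (kh+1) (by omega) (by show clt (g (kh+1)) P; rw [hgV]; exact hV)
        rw [hgV] at hmv
        exact not_clt_of_cle hmv (hgk ▸ clt_right _ _ _)
      | l =>
        have hoU : occAt a (p.take (kh + 1)) = some U := by
          rw [hstep, hd, occAt_append, hg kh hkhn, hgk]
          simp [occAt]
        -- relative position
        have hrel : occAt U (p.drop (kh+1)) = some x := by
          have h0 : occAt a (p.take (kh+1) ++ p.drop (kh+1)) = some x := by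
            rw [List.take_append_drop]; exact hocc
          rw [occAt_append, hoU] at h0
          exact h0
        have hstdU := Std_occAt (p.take kh) a _ hstd (hg kh hkhn)
        rw [hgk] at hstdU
        obtain ⟨hsU, hsV, hhc, hbfb⟩ := hstdU
        have hUx : clt U x := clt_trans hUa hax
        rcases hbfb (p.drop (kh+1)) x hrel hUx with ⟨rq, w, hpre, how, hw⟩ | ⟨rq, j, e, f, hpre, hne, hoe, hji, hns⟩
        · -- inner clause i: contradiction with minimality
          exfalso
          simp only [if_neg (by simp : ¬ (false = true))] at hw
          have habs : occAt a (p.take (kh+1) ++ rq) = some w := by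
            rw [occAt_append, hoU]; exact how
          have hpre2 : (p.take (kh+1) ++ rq) <+: p := prefix_comp hpre
          have hml : (p.take (kh+1) ++ rq).length ≤ n := by have := hpre2.length_le; omega
          have hgw : g (p.take (kh+1) ++ rq).length = w :=
            geq hml (by rw [← prefix_eq_take hpre2]; exact habs)
          have hwP : clt w P := lemmaN hV (Or.inr ⟨rfl, hUa⟩) w hw
          have := hmin _ hml (by rw [hgw]; exact hwP)
          rw [hgw] at this
          exact not_clt_of_cle this (hgk ▸ hw)
        · -- inner clause ii: transfer
          right
          refine ⟨p.take (kh+1) ++ rq, j, e, f, ?_, ?_, ?_, hji, ?_⟩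
          · exact prefix_comp hpre
          · intro he
            apply hne
            have : (p.take (kh+1) ++ rq).length = p.length := by rw [he]
            have hlen : rq.length = (p.drop (kh+1)).length := by
              rw [List.length_append] at this
              rw [List.length_drop]
              have h1 : (p.take (kh+1)).length = kh+1 := by
                rw [List.length_take]; omega
              omega
            exact List.IsPrefix.eq_of_length hpre hlen
          · rw [occAt_append, hoU]; exact hoe
          · intro r z' h1 h2 hoz'
            obtain ⟨s, rfl⟩ := h1
            have hrr : (rq ++ s) <+: p.drop (kh+1) := by
              apply prefix_decomp (p := p) (k := kh+1)
              rw [← List.append_assoc]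
              exact h2
            have hoz'' : occAt U (rq ++ s) = some z' := by
              rw [List.append_assoc, occAt_append, hoU] at hoz'
              exact hoz'
            exact hns (rq ++ s) z' ⟨s, rfl⟩ hrr hoz''
  · -- clause ii of ff transfers verbatim
    right
    exact H

end Hard1
section Hard2

lemma bfb_ft_to_ff {i : ℕ} {a b : CT} (hwa : WStd a)
    (h : BFB false true i a b) : BFB false false i a b := by
  intro p x hocc hax
  set n := p.length with hn
  set P := CT.C i a b with hP
  set g : ℕ → CT := fun k => (occAt a (p.take k)).getD CT.zero with hgdef
  have hg : ∀ k, k ≤ n → occAt a (p.take k) = some (g k) := by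
    intro k hk
    obtain ⟨z, hz⟩ := occAt_prefix hocc (List.take_prefix k p)
    rw [hgdef]; simp only [hz, Option.getD_some]
  have geq : ∀ {m : ℕ} {w : CT}, m ≤ n → occAt a (p.take m) = some w → g m = w := by
    intro m w hm hw
    have := hg m hm
    rw [this] at hw
    exact Option.some_inj.mp hw
  have hgn : g n = x := geq le_rfl (by rw [List.take_length]; exact hocc)
  have hg0 : g 0 = a := geq (Nat.zero_le _) (by simp [occAt])
  have hwst : ∀ k, k ≤ n → WStd (g k) := by
    intro k hk
    exact WStd_occAt _ _ _ hwa (hg k hk)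
  have htot : ∀ k m, k ≤ n → m ≤ n →
      clt (g k) (g m) ∨ g k = g m ∨ clt (g m) (g k) := by
    intro k m hk hm
    exact wstd_total (hwst k hk) (hwst m hm)
  by_cases hPex : ∃ k, k ≤ n ∧ clt (g k) P
  · obtain ⟨k, hk, hkP⟩ := hPex
    left
    exact ⟨p.take k, g k, List.take_prefix k p, hg k hk, by simpa using hkP⟩
  push_neg at hPex
  -- descending recursion
  suffices DESC : ∀ th, th ≤ n → clt a (g th) → (∀ r, th ≤ r → r < n → clt x (g r)) →
      ((∃ (q : List Dir) (z : CT), q <+: p ∧ occAt a q = some z ∧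
          (if false then cle z b else clt z (CT.C i a b))) ∨
        (∃ (q : List Dir) (j : ℕ) (e f : CT), q <+: p ∧ q ≠ p ∧
          occAt a q = some (CT.C j e f) ∧ j < i ∧
          ∀ (r : List Dir) (z : CT), q <+: r → r <+: p → occAt a r = some z →
            ¬ (if false then cle z f else clt z (CT.C j e f)))) by
    exact DESC n le_rfl (by rw [hgn]; exact hax) (by intro r h1 h2; omega)
  intro th
  induction th using Nat.strong_induction_on with
  | _ th IH =>
    intro hthn h1 hM
    rcases h (p.take th) (g th) (hg th hthn) h1 with ⟨q, z, hq, hoz, hz⟩ |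
      ⟨q0, j0, e0, f0, hq0, hne0, hoe0, hj0, hns0⟩
    · -- clause i of ft at ancestor: contradicts hPex
      exfalso
      simp only [if_neg (by simp : ¬ (false = true))] at hz
      have hm : q.length ≤ n := by
        have h2 := hq.length_le
        have h3 : (p.take th).length = th := by rw [List.length_take]; omega
        omega
      have : q <+: p := hq.trans (List.take_prefix th p)
      have hzq : g q.length = z := geq hm (by rw [← prefix_eq_take this]; exact hoz)
      exact hPex q.length hm (by rw [hzq]; exact hz)
    · -- ft passthrough witness at q0
      set k0 := q0.length with hk0
      have hthlen : (p.take th).length = th := by rw [List.length_take]; omega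
      have hq0eq : q0 = p.take k0 := by
        have h2 := prefix_eq_take hq0
        rw [h2, List.take_take]
        congr 1
        have := hq0.length_le
        rw [hthlen] at this
        omega
      have hk0th : k0 < th := by
        have hle := hq0.length_le
        rw [hthlen] at hle
        rcases Nat.eq_or_lt_of_le hle with he | h'
        · exfalso
          exact hne0 (hq0.eq_of_length (by rw [hthlen]; exact he))
        · exact h'
      have hk0n : k0 ≤ n := by omega
      have hgk0 : g k0 = CT.C j0 e0 f0 := geq hk0n (by rw [← hq0eq]; exact hoe0)
      have hR : ∀ m, k0 ≤ m → m ≤ th → ¬ cle (g m) f0 := by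
        intro m hm1 hm2 hle
        have := hns0 (p.take m) (g m) (by rw [hq0eq]; exact take_prefix_take hm1)
          (take_prefix_take hm2) (hg m (by omega))
        simp only [if_pos rfl] at this
        exact this hle
      obtain ⟨kb, hkb0, hkbn, hminb, hstrict⟩ := exists_firstMin g k0 n hk0n
        (fun k m h1' h2' h3' h4' => htot k m h2' h4')
      by_cases hkbeq : kb = n
      · -- recurse at k0
        subst hkbeq
        have hM' : ∀ r, k0 ≤ r → r < n → clt x (g r) := by
          intro r hr1 hr2
          have := hstrict r hr1 hr2
          rw [hgn] at this
          exact this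
        have hk0ltn : k0 < n := by omega
        exact IH k0 hk0th (by omega) (clt_trans hax (hM' k0 le_rfl hk0ltn)) hM'
      · -- witness at kb
        have hkbltn : kb < n := by omega
        have hkbth : kb ≤ th := by
          by_contra hgt
          push_neg at hgt
          have hx := hM kb (by omega) hkbltn
          have := hminb n (by omega) le_rfl
          rw [hgn] at this
          exact not_clt_of_cle this hx
        -- head of g kb
        have hcle : cle (g kb) (g k0) := hminb k0 le_rfl hk0n
        obtain ⟨K, u, v, hshape, hKi⟩ :
            ∃ K u v, g kb = CT.C K u v ∧ K < i := by
          rcases hcle with hlt | heq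
          · rw [hgk0] at hlt
            obtain ⟨K, u, v, hs, hKl, _⟩ := spine hlt (hR kb hkb0 hkbth)
            refine ⟨K, u, v, hs, ?_⟩
            rcases hKl with h' | ⟨rfl, _⟩
            · omega
            · exact hj0
          · rw [heq, hgk0]
            exact ⟨j0, e0, f0, rfl, hj0⟩
        right
        refine ⟨p.take kb, K, u, v, List.take_prefix _ _, take_ne_self hkbltn,
          by rw [hg kb hkbn, hshape], hKi, ?_⟩
        intro r z h1' h2' hoz'
        simp only [if_neg (by simp : ¬ (false = true))]
        intro hlt
        have hrl : r.length ≤ n := by have := h2'.length_le; omega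
        have hrk : kb ≤ r.length := by
          have := h1'.length_le
          rw [List.length_take] at this
          omega
        have hz' : g r.length = z := geq hrl (by rw [← prefix_eq_take h2']; exact hoz')
        have := hminb r.length (by omega) hrl
        rw [hz'] at this
        exact not_clt_of_cle this (hshape ▸ hlt)

end Hard2
section Easy

lemma bfb_tf_to_ff {i : ℕ} {a b : CT} (h : BFB true false i a b) :
    BFB false false i a b := by
  intro p x hocc hax
  rcases h p x hocc hax with ⟨q, z, h1, h2, h3⟩ | H
  · left
    refine ⟨q, z, h1, h2, ?_⟩
    simp only [if_pos rfl] at h3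
    simpa using clt_C_of_cle_right i a h3
  · right; exact H

lemma bfb_ff_to_ft {i : ℕ} {a b : CT} (h : BFB false false i a b) :
    BFB false true i a b := by
  intro p x hocc hax
  rcases h p x hocc hax with ⟨q, z, h1, h2, h3⟩ | ⟨q, j, e, f, h1, h2, h3, h4, h5⟩
  · left; exact ⟨q, z, h1, h2, h3⟩
  · right
    refine ⟨q, j, e, f, h1, h2, h3, h4, ?_⟩
    intro r z hr1 hr2 hoz
    have := h5 r z hr1 hr2 hoz
    simp only [if_neg (by simp : ¬ (false = true))] at this
    simp only [if_pos rfl]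
    intro hle
    exact this (clt_C_of_cle_right j e hle)

end Easy

lemma main_equiv : ∀ t : CT,
    (Std false false t ↔ Std true false t) ∧ (Std false false t ↔ Std false true t) := by
  intro t
  induction t with
  | zero => exact ⟨Iff.rfl, Iff.rfl⟩
  | C i a b iha ihb =>
    constructor
    · constructor
      · rintro ⟨ha, hb, hc, hbfb⟩
        exact ⟨iha.1.mp ha, ihb.1.mp hb, hc, bfb_ff_to_tf ha hbfb⟩
      · rintro ⟨ha, hb, hc, hbfb⟩
        exact ⟨iha.1.mpr ha, ihb.1.mpr hb, hc, bfb_tf_to_ff hbfb⟩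
    · constructor
      · rintro ⟨ha, hb, hc, hbfb⟩
        exact ⟨iha.2.mp ha, ihb.2.mp hb, hc, bfb_ff_to_ft hbfb⟩
      · rintro ⟨ha, hb, hc, hbfb⟩
        have haff : Std false false a := iha.2.mpr ha
        exact ⟨haff, ihb.2.mpr hb, hc, bfb_ft_to_ff haff.wstd hbfb⟩

theorem std_variants_equiv :
    (∀ t : CT, Std false false t ↔ Std true false t) ∧
    (∀ t : CT, Std false false t ↔ Std false true t) := by
  exact ⟨fun t => (main_equiv t).1, fun t => (main_equiv t).2⟩
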